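/- Let K be a field of characteristic zero and (L, ·) a pre-Lie algebra over K. For n ≥ 1 set C_n(L) = L ⊗ Λ^{n−1}(L) (with C_1(L) = L), and define d : C_n(L) → C_{n−1}(L) by d(v₀ ⊗ v₁∧⋯∧v_{n−1}) = Σ_{1≤j≤n−1} (−1)^j (v₀·v_j) ⊗ v₁∧⋯∧v̂_j∧⋯∧v_{n−1} + Σ_{1≤i<j≤n−1} (−1)^{i+j−1} v₀ ⊗ [v_i,v_j]∧v₁∧⋯∧v̂_i∧⋯∧v̂_j∧⋯∧v_{n−1}, where [a,b] = a·b − b·a and v̂ means omission. Then d is a well-defined linear map and d ∘ d = 0, so (C_•(L), d) is a chain complex. -/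

import Mathlib

open TensorProduct

/-- The wedge `v 0 ∧ ⋯ ∧ v (n-1)` as an element of the `n`-th exterior power `⋀[K]^n L`. -/
noncomputable def wedge (K : Type*) {L : Type*} [Field K] [AddCommGroup L] [Module K L]
    (n : ℕ) (v : Fin n → L) : ⋀[K]^n L :=
  ⟨ExteriorAlgebra.ιMulti K n v, ExteriorAlgebra.ιMulti_range K n (Set.mem_range_self v)⟩

namespace PreLieCE
open ExteriorAlgebra

variable {K L : Type*} [Field K] [AddCommGroup L] [Module K L]
variable (mul : L →ₗ[K] L →ₗ[K] L)

def br : L →ₗ[K] L →ₗ[K] L := mul - mul.flip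
lemma br_apply (x y : L) : br mul x y = mul x y - mul y x := rfl

lemma br_self (x : L) : br mul x x = 0 := by simp [br_apply]

section hpl
variable (hpl : ∀ x y z : L,
      mul (mul x y) z - mul x (mul y z) = mul (mul x z) y - mul x (mul z y))
include hpl

lemma mod_prop (m x y : L) :
    mul (mul m x) y - mul (mul m y) x = mul m (br mul x y) := by
  have h := hpl m x y
  rw [br_apply, map_sub]
  rw [sub_eq_sub_iff_add_eq_add] at h ⊢
  rw [h]; abel

lemma br_jacobi (x y z : L) :
    br mul x (br mul y z) - br mul y (br mul x z) = br mul (br mul x y) z := by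
  have h1 := (mod_prop mul hpl x y z).symm
  have h2 := (mod_prop mul hpl y x z).symm
  have h3 := (mod_prop mul hpl z x y).symm
  simp only [br_apply] at h1 h2 h3 ⊢
  rw [h1, h2, h3]
  simp only [map_sub, LinearMap.sub_apply]
  abel

end hpl

local notation "E" => ExteriorAlgebra K L

/-- One step of the fold computing the Lie derivative `θ_x` on the exterior algebra.
The state is a pair `(ω, θ_x ω)`. -/
noncomputable def thetaStep (x : L) : L →ₗ[K] (E × E) →ₗ[K] (E × E) :=
  LinearMap.mk₂ K
    (fun y p => (ι K y * p.1, ι K (br mul x y) * p.1 + ι K y * p.2))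
    (by
      intro y₁ y₂ p
      simp only [map_add, add_mul, Prod.mk_add_mk, Prod.mk.injEq]
      exact ⟨trivial, by abel⟩)
    (by
      intro c y p
      simp only [map_smul, smul_mul_assoc, Prod.smul_mk, smul_add])
    (by
      intro y p q
      simp only [Prod.fst_add, Prod.snd_add, mul_add, Prod.mk_add_mk, Prod.mk.injEq]
      exact ⟨trivial, by abel⟩)
    (by
      intro c y p
      simp only [Prod.smul_fst, Prod.smul_snd, mul_smul_comm, Prod.smul_mk, smul_add])

lemma thetaStep_apply_fst (x y : L) (p : E × E) :
    (thetaStep mul x y p).1 = ι K y * p.1 := rfl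

lemma thetaStep_apply_snd (x y : L) (p : E × E) :
    (thetaStep mul x y p).2 = ι K (br mul x y) * p.1 + ι K y * p.2 := rfl

lemma thetaStep_sq (x y : L) (p : E × E) :
    thetaStep mul x y (thetaStep mul x y p) = (0 : QuadraticForm K L) y • p := by
  have hy : ι K y * ι K y = (0 : E) := ι_sq_zero y
  have hsw : ι K (br mul x y) * ι K y = -(ι K y * ι K (br mul x y)) :=
    eq_neg_of_add_eq_zero_left (ι_add_mul_swap _ _)
  simp only [thetaStep, LinearMap.mk₂_apply]
  ext
  · simp [← mul_assoc, hy]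
  · simp only [QuadraticMap.zero_apply, zero_smul, Prod.snd_zero]
    rw [mul_add, ← mul_assoc, ← mul_assoc, ← mul_assoc, hsw, hy, zero_mul, add_zero,
      neg_mul, neg_add_cancel]

/-- The Lie derivative `θ_x` on the exterior algebra. -/
noncomputable def theta (x : L) : E →ₗ[K] E :=
  (LinearMap.snd K E E) ∘ₗ
    (CliffordAlgebra.foldr (0 : QuadraticForm K L) (thetaStep mul x) (thetaStep_sq mul x) (1, 0))

lemma thetaFold_fst (x : L) (ω : E) :
    (CliffordAlgebra.foldr (0 : QuadraticForm K L) (thetaStep mul x) (thetaStep_sq mul x)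
      (1, 0) ω).1 = ω := by
  induction ω using CliffordAlgebra.left_induction with
  | algebraMap r =>
      rw [CliffordAlgebra.foldr_algebraMap]
      simp [Algebra.algebraMap_eq_smul_one]
  | add a b ha hb => simp [map_add, ha, hb]
  | ι_mul a z ha =>
      rw [CliffordAlgebra.foldr_mul, CliffordAlgebra.foldr_ι, thetaStep_apply_fst, ha]

lemma theta_algebraMap (x : L) (r : K) : theta mul x (algebraMap K E r) = 0 := by
  simp [theta, CliffordAlgebra.foldr_algebraMap]

lemma theta_one (x : L) : theta mul x (1 : E) = 0 := by
  simpa using theta_algebraMap mul x 1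

lemma theta_ι_mul (x y : L) (ω : E) :
    theta mul x (ι K y * ω) = ι K (br mul x y) * ω + ι K y * theta mul x ω := by
  simp only [theta, LinearMap.comp_apply, LinearMap.snd_apply]
  rw [CliffordAlgebra.foldr_mul, CliffordAlgebra.foldr_ι, thetaStep_apply_snd, thetaFold_fst]


lemma theta_add_left (x x' : L) (ω : E) :
    theta mul (x + x') ω = theta mul x ω + theta mul x' ω := by
  induction ω using CliffordAlgebra.left_induction with
  | algebraMap r => simp [theta_algebraMap]
  | add a b ha hb =>
      simp only [map_add, ha, hb]; abel
  | ι_mul a z ha =>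
      rw [theta_ι_mul, theta_ι_mul, theta_ι_mul, ha]
      simp only [map_add, LinearMap.add_apply, add_mul, mul_add]
      abel

lemma theta_smul_left (c : K) (x : L) (ω : E) :
    theta mul (c • x) ω = c • theta mul x ω := by
  induction ω using CliffordAlgebra.left_induction with
  | algebraMap r => simp [theta_algebraMap]
  | add a b ha hb => simp only [map_add, ha, hb, smul_add]
  | ι_mul a z ha =>
      rw [theta_ι_mul, theta_ι_mul, ha]
      simp only [map_smul, LinearMap.smul_apply, smul_mul_assoc, mul_smul_comm, smul_add]

lemma theta_comm
    (hpl : ∀ x y z : L,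
      mul (mul x y) z - mul x (mul y z) = mul (mul x z) y - mul x (mul z y))
    (x y : L) (ω : E) :
    theta mul x (theta mul y ω) - theta mul y (theta mul x ω) =
      theta mul (br mul x y) ω := by
  induction ω using CliffordAlgebra.left_induction with
  | algebraMap r => simp [theta_algebraMap]
  | add a b ha hb =>
      simp only [map_add]
      rw [← hb, ← ha]; abel
  | ι_mul a z ha =>
      rw [theta_ι_mul, theta_ι_mul, map_add, map_add, theta_ι_mul, theta_ι_mul,
        theta_ι_mul, theta_ι_mul, theta_ι_mul]
      rw [← ha]
      have hj : br mul x (br mul y z) = br mul (br mul x y) z + br mul y (br mul x z) := by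
        rw [← br_jacobi mul hpl x y z]; abel
      rw [hj, map_add, add_mul]
      simp only [mul_sub, mul_add]
      abel


local notation "C" => L ⊗[K] ExteriorAlgebra K L

/-- Wedging with `x` on the left. -/
noncomputable def eps (x : L) : C →ₗ[K] C :=
  LinearMap.lTensor L (LinearMap.mulLeft K (ι K x))

/-- Right action of `x` on the coefficient. -/
noncomputable def rho (x : L) : C →ₗ[K] C :=
  LinearMap.rTensor (ExteriorAlgebra K L) (mul.flip x)

/-- The total Lie derivative. -/
noncomputable def Lo (x : L) : C →ₗ[K] C :=
  LinearMap.lTensor L (theta mul x) - rho mul x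

lemma eps_tmul (x m : L) (ω : E) : eps (L := L) x (m ⊗ₜ[K] ω) = m ⊗ₜ[K] (ι K x * ω) := rfl

lemma Lo_tmul (x m : L) (ω : E) :
    Lo mul x (m ⊗ₜ[K] ω) = m ⊗ₜ[K] theta mul x ω - mul m x ⊗ₜ[K] ω := rfl

lemma eps_eps (x : L) (c : C) : eps (L := L) x (eps (L := L) x c) = 0 := by
  induction c with
  | zero => simp
  | tmul m ω => rw [eps_tmul, eps_tmul, ← mul_assoc, ι_sq_zero, zero_mul, tmul_zero]
  | add a b ha hb => rw [map_add, map_add, ha, hb, add_zero]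

lemma eps_add_left (x x' : L) (c : C) :
    eps (L := L) (x + x') c = eps (L := L) x c + eps (L := L) x' c := by
  induction c with
  | zero => simp
  | tmul m ω => simp only [eps_tmul, map_add, add_mul, tmul_add]
  | add a b ha hb => rw [map_add, map_add, map_add, ha, hb]; abel

lemma eps_smul_left (r : K) (x : L) (c : C) :
    eps (L := L) (r • x) c = r • eps (L := L) x c := by
  induction c with
  | zero => simp
  | tmul m ω => simp only [eps_tmul, map_smul, smul_mul_assoc, tmul_smul]
  | add a b ha hb => rw [map_add, map_add, ha, hb, smul_add]

lemma eps_zero_left (c : C) : eps (L := L) (0 : L) c = 0 := by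
  induction c with
  | zero => simp
  | tmul m ω => rw [eps_tmul, map_zero, zero_mul, tmul_zero]
  | add a b ha hb => rw [map_add, ha, hb, add_zero]

lemma Lo_add_left (x x' : L) (c : C) :
    Lo mul (x + x') c = Lo mul x c + Lo mul x' c := by
  induction c with
  | zero => simp
  | tmul m ω =>
      simp only [Lo_tmul, theta_add_left, map_add, LinearMap.add_apply, tmul_add, add_tmul]
      abel
  | add a b ha hb => rw [map_add, map_add, map_add, ha, hb]; abel

lemma Lo_smul_left (r : K) (x : L) (c : C) :
    Lo mul (r • x) c = r • Lo mul x c := by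
  induction c with
  | zero => simp
  | tmul m ω =>
      simp only [Lo_tmul, theta_smul_left, map_smul, LinearMap.smul_apply, tmul_smul, smul_sub,
        smul_tmul']
  | add a b ha hb => rw [map_add, map_add, ha, hb, smul_add]

lemma Lo_eps (x y : L) (c : C) :
    Lo mul x (eps (L := L) y c) = eps (L := L) y (Lo mul x c) + eps (L := L) (br mul x y) c := by
  induction c with
  | zero => simp
  | tmul m ω =>
      simp only [eps_tmul, Lo_tmul, theta_ι_mul, tmul_add, map_sub, tmul_sub]
      abel
  | add a b ha hb => simp only [map_add, ha, hb]; abel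

lemma Lo_Lo
    (hpl : ∀ x y z : L,
      mul (mul x y) z - mul x (mul y z) = mul (mul x z) y - mul x (mul z y))
    (x y : L) (c : C) :
    Lo mul x (Lo mul y c) - Lo mul y (Lo mul x c) = Lo mul (br mul x y) c := by
  induction c with
  | zero => simp
  | tmul m ω =>
      simp only [Lo_tmul, map_sub, tmul_sub, sub_tmul]
      rw [← theta_comm mul hpl x y ω, ← mod_prop mul hpl m x y]
      simp only [map_sub, tmul_sub, sub_tmul]
      abel
  | add a b ha hb =>
      simp only [map_add]
      rw [← hb, ← ha]; abel

/-- One step of the fold computing the pre-Lie (Chevalley–Eilenberg) differential.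
The state is a pair `(c, D c)`. -/
noncomputable def dStep : L →ₗ[K] (C × C) →ₗ[K] (C × C) :=
  LinearMap.mk₂ K
    (fun z p => (eps (L := L) z p.1, Lo mul z p.1 - eps (L := L) z p.2))
    (by
      intro z₁ z₂ p
      simp only [eps_add_left, Lo_add_left, Prod.mk_add_mk, Prod.mk.injEq]
      exact ⟨trivial, by abel⟩)
    (by
      intro r z p
      simp only [eps_smul_left, Lo_smul_left, Prod.smul_mk, smul_sub])
    (by
      intro z p q
      simp only [Prod.fst_add, Prod.snd_add, map_add, Prod.mk_add_mk, Prod.mk.injEq]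
      exact ⟨trivial, by abel⟩)
    (by
      intro r z p
      simp only [Prod.smul_fst, Prod.smul_snd, map_smul, Prod.smul_mk, smul_sub])

lemma dStep_apply_fst (z : L) (p : C × C) :
    (dStep mul z p).1 = eps (L := L) z p.1 := rfl

lemma dStep_apply_snd (z : L) (p : C × C) :
    (dStep mul z p).2 = Lo mul z p.1 - eps (L := L) z p.2 := rfl

lemma dStep_sq (z : L) (p : C × C) :
    dStep mul z (dStep mul z p) = (0 : QuadraticForm K L) z • p := by
  ext
  · rw [dStep_apply_fst, dStep_apply_fst, eps_eps]
    simp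
  · rw [dStep_apply_snd, dStep_apply_fst, dStep_apply_snd, Lo_eps, br_self, eps_zero_left,
      add_zero, map_sub, eps_eps, sub_zero, sub_self]
    simp


/-- Initial state of the differential fold. -/
noncomputable def initMap : L →ₗ[K] (C × C) :=
  LinearMap.prod ((TensorProduct.mk K L (ExteriorAlgebra K L)).flip 1) 0

@[simp] lemma initMap_apply (m : L) :
    initMap (K := K) (L := L) m = (m ⊗ₜ[K] (1 : E), 0) := rfl

/-- The pre-Lie differential as an operator on `L ⊗ ExteriorAlgebra K L`. -/
noncomputable def Dop : C →ₗ[K] C :=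
  TensorProduct.lift
    (((CliffordAlgebra.foldr (0 : QuadraticForm K L) (dStep mul) (dStep_sq mul)) ∘ₗ
        initMap).compr₂ (LinearMap.snd K C C))

lemma Dop_tmul (m : L) (ω : E) :
    Dop mul (m ⊗ₜ[K] ω) =
      (CliffordAlgebra.foldr (0 : QuadraticForm K L) (dStep mul) (dStep_sq mul)
        (m ⊗ₜ[K] (1 : E), 0) ω).2 := by
  simp [Dop, lift.tmul]

lemma dFold_fst (m : L) (ω : E) :
    (CliffordAlgebra.foldr (0 : QuadraticForm K L) (dStep mul) (dStep_sq mul)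
        (m ⊗ₜ[K] (1 : E), 0) ω).1 = m ⊗ₜ[K] ω := by
  induction ω using CliffordAlgebra.left_induction with
  | algebraMap r =>
      rw [CliffordAlgebra.foldr_algebraMap]
      simp [Algebra.algebraMap_eq_smul_one, tmul_smul]
  | add a b ha hb => simp [map_add, ha, hb, tmul_add]
  | ι_mul a z ha =>
      rw [CliffordAlgebra.foldr_mul, CliffordAlgebra.foldr_ι, dStep_apply_fst, ha, eps_tmul]

lemma Dop_one (m : L) : Dop mul (m ⊗ₜ[K] (1 : E)) = 0 := by
  rw [Dop_tmul, CliffordAlgebra.foldr_one]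

lemma Dop_ι_mul (m x : L) (ω : E) :
    Dop mul (m ⊗ₜ[K] (ι K x * ω)) =
      Lo mul x (m ⊗ₜ[K] ω) - eps (L := L) x (Dop mul (m ⊗ₜ[K] ω)) := by
  rw [Dop_tmul, CliffordAlgebra.foldr_mul, CliffordAlgebra.foldr_ι, dStep_apply_snd,
    dFold_fst, Dop_tmul]

lemma Dop_eps (x : L) (c : C) :
    Dop mul (eps (L := L) x c) = Lo mul x c - eps (L := L) x (Dop mul c) := by
  induction c with
  | zero => simp
  | tmul m ω => rw [eps_tmul, Dop_ι_mul]
  | add a b ha hb => simp only [map_add, ha, hb]; abel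

lemma Dop_Lo
    (hpl : ∀ x y z : L,
      mul (mul x y) z - mul x (mul y z) = mul (mul x z) y - mul x (mul z y))
    (x : L) (c : C) :
    Dop mul (Lo mul x c) = Lo mul x (Dop mul c) := by
  induction c with
  | zero => simp
  | tmul m ω =>
      induction ω using CliffordAlgebra.left_induction with
      | algebraMap r =>
          have h1 : (m ⊗ₜ[K] (algebraMap K E r) : C) = r • (m ⊗ₜ[K] (1 : E)) := by
            rw [Algebra.algebraMap_eq_smul_one, tmul_smul]
          simp [h1, Lo_tmul, theta_one, Dop_one]
      | add a b ha hb =>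
          have h1 : (m ⊗ₜ[K] (a + b) : C) = m ⊗ₜ[K] a + m ⊗ₜ[K] b := tmul_add _ _ _
          rw [h1, map_add, map_add, map_add, map_add, ha, hb]
      | ι_mul a z ha =>
          have h1 : (m ⊗ₜ[K] (CliffordAlgebra.ι 0 z * a) : C) =
              eps (L := L) z (m ⊗ₜ[K] a) := rfl
          have h2 := Lo_Lo mul hpl x z (m ⊗ₜ[K] a)
          rw [h1, Lo_eps, map_add, Dop_eps, Dop_eps, Dop_eps, ha, map_sub, Lo_eps]
          rw [← sub_eq_zero] at h2 ⊢
          rw [← neg_eq_zero, ← h2]; abel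
  | add a b ha hb => simp only [map_add, ha, hb]

lemma Dop_Dop
    (hpl : ∀ x y z : L,
      mul (mul x y) z - mul x (mul y z) = mul (mul x z) y - mul x (mul z y))
    (c : C) :
    Dop mul (Dop mul c) = 0 := by
  induction c with
  | zero => simp
  | tmul m ω =>
      induction ω using CliffordAlgebra.left_induction with
      | algebraMap r =>
          have h1 : (m ⊗ₜ[K] (algebraMap K E r) : C) = r • (m ⊗ₜ[K] (1 : E)) := by
            rw [Algebra.algebraMap_eq_smul_one, tmul_smul]
          simp [h1, Dop_one]
      | add a b ha hb =>
          have h1 : (m ⊗ₜ[K] (a + b) : C) = m ⊗ₜ[K] a + m ⊗ₜ[K] b := tmul_add _ _ _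
          rw [h1, map_add, map_add, ha, hb, add_zero]
      | ι_mul a z ha =>
          have h1 : (m ⊗ₜ[K] (CliffordAlgebra.ι 0 z * a) : C) =
              eps (L := L) z (m ⊗ₜ[K] a) := rfl
          rw [h1, Dop_eps, map_sub, Dop_eps, Dop_Lo mul hpl, ha, map_zero, sub_zero, sub_self]
  | add a b ha hb => simp only [map_add, ha, hb, add_zero]


lemma vecTail_eq_tail {α : Type*} (v : Fin (n+1) → α) : Matrix.vecTail v = Fin.tail v := rfl

lemma ιMulti_cons (n : ℕ) (x : L) (t : Fin n → L) :
    (ιMulti K (n+1) (Fin.cons x t) : E) = ι K x * ιMulti K n t := by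
  have ht : Matrix.vecTail (Fin.cons x t) = t := by
    funext i
    simp [Matrix.vecTail]
  rw [ιMulti_succ_apply, ht, Fin.cons_zero]

lemma removeNth_succ_cons {α : Type*} {n : ℕ} (j : Fin (n+1)) (x : α) (t : Fin (n+1) → α) :
    Fin.removeNth (α := fun _ => α) j.succ (Fin.cons x t)
      = (Fin.cons x (Fin.removeNth (α := fun _ => α) j t) : Fin (n+1) → α) := by
  funext i
  induction i using Fin.cases with
  | zero =>
      show (Fin.cons x t : Fin (n+2) → α) (j.succ.succAbove 0)
        = (Fin.cons x (Fin.removeNth j t) : Fin (n+1) → α) 0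
      rw [Fin.succ_succAbove_zero, Fin.cons_zero, Fin.cons_zero]
  | succ i' =>
      show (Fin.cons x t : Fin (n+2) → α) (j.succ.succAbove i'.succ)
        = (Fin.cons x (Fin.removeNth j t) : Fin (n+1) → α) i'.succ
      rw [Fin.succ_succAbove_succ, Fin.cons_succ, Fin.cons_succ]
      rfl

lemma insertNth_succ {α : Type*} {n : ℕ} (p : Fin (n+1)) (z : α) (u : Fin (n+1) → α) :
    Fin.insertNth p.succ z u
      = (Fin.cons (u 0) (Fin.insertNth p z (Fin.tail u)) : Fin (n+2) → α) := by
  funext i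
  induction i using Fin.cases with
  | zero =>
      rw [show (0 : Fin (n+2)) = p.succ.succAbove 0 from (Fin.succ_succAbove_zero p).symm,
        Fin.insertNth_apply_succAbove]
      rw [Fin.succ_succAbove_zero, Fin.cons_zero]
  | succ j =>
      rw [Fin.cons_succ]
      rcases eq_or_ne j p with rfl | hj
      · rw [Fin.insertNth_apply_same, Fin.insertNth_apply_same]
      · obtain ⟨j', rfl⟩ := Fin.exists_succAbove_eq hj
        rw [Fin.insertNth_apply_succAbove, ← Fin.succ_succAbove_succ,
          Fin.insertNth_apply_succAbove]
        rfl

lemma ιMulti_insertNth : ∀ (n : ℕ) (p : Fin (n+1)) (z : L) (u : Fin n → L),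
    (ιMulti K (n+1) (p.insertNth z u) : E) =
      ((-1 : K) ^ (p : ℕ)) • (ιMulti K (n+1) (Fin.cons z u) : E) := by
  intro n
  induction n with
  | zero =>
      intro p z u
      have hp : p = 0 := Fin.ext (by omega)
      subst hp
      rw [Fin.insertNth_zero]
      simp
  | succ n IH =>
      intro p z u
      induction p using Fin.cases with
      | zero => rw [Fin.insertNth_zero]; simp
      | succ p' =>
          rw [insertNth_succ, ιMulti_cons, IH p' z (Fin.tail u), ιMulti_cons]
          have hsw : ι K (u 0) * ι K z = -(ι K z * ι K (u 0)) :=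
            eq_neg_of_add_eq_zero_left (ι_add_mul_swap _ _)
          have hu : (ιMulti K (n+1) u : E) = ι K (u 0) * ιMulti K n (Fin.tail u) := by
            conv_lhs => rw [← Fin.cons_self_tail u]
            rw [ιMulti_cons]
          have hc : (ιMulti K (n+2) (Fin.cons z u) : E) =
              ι K z * (ι K (u 0) * ιMulti K n (Fin.tail u)) := by
            rw [ιMulti_cons, hu]
          rw [mul_smul_comm, ← mul_assoc, hsw, neg_mul, hc, Fin.val_succ, pow_succ,
            mul_comm ((-1:K)^(p' : ℕ)) (-1 : K), mul_smul, neg_one_smul, smul_neg, mul_assoc]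

lemma ιMulti_update (n : ℕ) (k : Fin (n+1)) (z : L) (v : Fin (n+1) → L) :
    (ιMulti K (n+1) (Function.update v k z) : E) =
      ((-1 : K) ^ (k : ℕ)) • (ιMulti K (n+1) (Fin.cons z (k.removeNth v)) : E) := by
  rw [← Fin.insertNth_removeNth, ιMulti_insertNth]

lemma theta_ιMulti (x : L) : ∀ (n : ℕ) (v : Fin n → L),
    theta mul x (ιMulti K n v : E) =
      ∑ k : Fin n, (ιMulti K n (Function.update v k (br mul x (v k))) : E) := by
  intro n
  induction n with
  | zero =>
      intro v
      rw [ιMulti_zero_apply, theta_one]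
      simp
  | succ n IH =>
      intro v
      rw [show v = Fin.cons (v 0) (Fin.tail v) from (Fin.cons_self_tail v).symm]
      rw [ιMulti_cons, theta_ι_mul, IH, Finset.mul_sum, Fin.sum_univ_succ]
      congr 1
      · rw [Fin.update_cons_zero, Fin.cons_zero, ιMulti_cons]
      · apply Finset.sum_congr rfl
        intro k _
        rw [Fin.cons_succ, ← Fin.cons_update, ιMulti_cons]


/-- The explicit pre-Lie differential formula, valued in `L ⊗ ExteriorAlgebra K L`. -/
noncomputable def rhsE (n : ℕ) (m : L) (v : Fin (n+1) → L) : C :=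
  (∑ j : Fin (n+1), ((-1 : K) ^ (j.val + 1)) •
      (mul m (v j) ⊗ₜ[K] (ιMulti K n (j.removeNth v) : E)))
  + ∑ j : Fin (n+1), ∑ i : Fin (n+1),
      if i < j then
        ((-1 : K) ^ (j.val + 1)) •
          (m ⊗ₜ[K] (ιMulti K n (Fin.removeNth j (Function.update v i (br mul (v i) (v j)))) : E))
      else 0

lemma sgn_add_two (a : ℕ) : ((-1 : K) ^ (a + 1 + 1)) = (-1 : K) ^ a := by
  rw [pow_succ, pow_succ, mul_neg_one, mul_neg_one, neg_neg]

lemma rhsE_cons (n : ℕ) (m x : L) (t : Fin (n+1) → L) :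
    rhsE mul (n+1) m (Fin.cons x t)
      = - (mul m x ⊗ₜ[K] (ιMulti K (n+1) t : E))
        + m ⊗ₜ[K] (∑ k : Fin (n+1), (ιMulti K (n+1) (Function.update t k (br mul x (t k))) : E))
        - eps (L := L) x (rhsE mul n m t) := by
  have hS1 : (∑ j : Fin (n+2), ((-1 : K) ^ (j.val + 1)) •
        (mul m ((Fin.cons x t : Fin (n+2) → L) j) ⊗ₜ[K]
          (ιMulti K (n+1) (Fin.removeNth (α := fun _ => L) j (Fin.cons x t)) : E)))
      = - (mul m x ⊗ₜ[K] (ιMulti K (n+1) t : E))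
        - eps (L := L) x (∑ j : Fin (n+1), ((-1 : K) ^ (j.val + 1)) •
            (mul m (t j) ⊗ₜ[K] (ιMulti K n (j.removeNth t) : E))) := by
    rw [Fin.sum_univ_succ, map_sum, sub_eq_add_neg, ← Finset.sum_neg_distrib]
    congr 1
    · rw [Fin.cons_zero, Fin.removeNth_zero, Fin.tail_cons]
      simp
    · apply Finset.sum_congr rfl
      intro j _
      rw [map_smul, eps_tmul, Fin.cons_succ, removeNth_succ_cons, ιMulti_cons,
        Fin.val_succ, pow_succ ((-1:K)) (j.val+1), mul_neg_one, neg_smul]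
  have hS2 : (∑ j : Fin (n+2), ∑ i : Fin (n+2),
        if i < j then ((-1 : K) ^ (j.val + 1)) •
          (m ⊗ₜ[K] (ιMulti K (n+1)
            (Fin.removeNth (α := fun _ => L) j
              (Function.update (Fin.cons x t) i
                (br mul ((Fin.cons x t : Fin (n+2) → L) i)
                  ((Fin.cons x t : Fin (n+2) → L) j)))) : E)) else 0)
      = m ⊗ₜ[K] (∑ k : Fin (n+1), (ιMulti K (n+1) (Function.update t k (br mul x (t k))) : E))
        - eps (L := L) x (∑ j : Fin (n+1), ∑ i : Fin (n+1),
            if i < j then ((-1 : K) ^ (j.val + 1)) •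
              (m ⊗ₜ[K] (ιMulti K n
                (Fin.removeNth j (Function.update t i (br mul (t i) (t j)))) : E))
            else 0) := by
    rw [Fin.sum_univ_succ]
    simp only [Fin.not_lt_zero, if_false, Finset.sum_const_zero, zero_add]
    have hterm : ∀ j : Fin (n+1),
        (∑ i : Fin (n+2), if i < j.succ then ((-1 : K) ^ (j.succ.val + 1)) •
            (m ⊗ₜ[K] (ιMulti K (n+1)
              (Fin.removeNth (α := fun _ => L) j.succ
                (Function.update (Fin.cons x t) i
                  (br mul ((Fin.cons x t : Fin (n+2) → L) i)
                    ((Fin.cons x t : Fin (n+2) → L) j.succ)))) : E)) else 0)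
          = m ⊗ₜ[K] (ιMulti K (n+1) (Function.update t j (br mul x (t j))) : E)
            + ∑ i : Fin (n+1), (if i < j then
                (-((-1 : K) ^ (j.val + 1))) •
                  (m ⊗ₜ[K] (ι K x *
                    (ιMulti K n (Fin.removeNth j
                      (Function.update t i (br mul (t i) (t j)))) : E)))
              else 0) := by
      intro j
      rw [Fin.sum_univ_succ]
      congr 1
      · rw [if_pos (Fin.succ_pos j), Fin.cons_zero, Fin.cons_succ, Fin.update_cons_zero,
          removeNth_succ_cons, ιMulti_update, tmul_smul, Fin.val_succ, sgn_add_two]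
      · apply Finset.sum_congr rfl
        intro i _
        simp only [Fin.succ_lt_succ_iff]
        by_cases h : i < j
        · rw [if_pos h, if_pos h, Fin.cons_succ, Fin.cons_succ, ← Fin.cons_update,
            removeNth_succ_cons, ιMulti_cons, Fin.val_succ,
            pow_succ ((-1:K)) (j.val+1), mul_neg_one]
        · rw [if_neg h, if_neg h]
    calc (∑ j : Fin (n+1), ∑ i : Fin (n+2), if i < j.succ then ((-1 : K) ^ (j.succ.val + 1)) •
            (m ⊗ₜ[K] (ιMulti K (n+1)
              (Fin.removeNth (α := fun _ => L) j.succ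
                (Function.update (Fin.cons x t) i
                  (br mul ((Fin.cons x t : Fin (n+2) → L) i)
                    ((Fin.cons x t : Fin (n+2) → L) j.succ)))) : E)) else 0)
        = ∑ j : Fin (n+1),
            (m ⊗ₜ[K] (ιMulti K (n+1) (Function.update t j (br mul x (t j))) : E)
            + ∑ i : Fin (n+1), (if i < j then
                (-((-1 : K) ^ (j.val + 1))) •
                  (m ⊗ₜ[K] (ι K x *
                    (ιMulti K n (Fin.removeNth j
                      (Function.update t i (br mul (t i) (t j)))) : E)))
              else 0)) := Finset.sum_congr rfl fun j _ => hterm j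
      _ = m ⊗ₜ[K] (∑ k : Fin (n+1), (ιMulti K (n+1) (Function.update t k (br mul x (t k))) : E))
        - eps (L := L) x (∑ j : Fin (n+1), ∑ i : Fin (n+1),
            if i < j then ((-1 : K) ^ (j.val + 1)) •
              (m ⊗ₜ[K] (ιMulti K n
                (Fin.removeNth j (Function.update t i (br mul (t i) (t j)))) : E))
            else 0) := by
          rw [Finset.sum_add_distrib, tmul_sum, sub_eq_add_neg, map_sum,
            ← Finset.sum_neg_distrib]
          congr 1
          apply Finset.sum_congr rfl
          intro j _
          rw [map_sum, ← Finset.sum_neg_distrib]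
          apply Finset.sum_congr rfl
          intro i _
          by_cases h : i < j
          · rw [if_pos h, if_pos h, map_smul, eps_tmul, ← neg_smul]
          · rw [if_neg h, if_neg h, map_zero, neg_zero]
  rw [rhsE, rhsE, hS1, hS2, map_add]
  abel


lemma Dop_ιMulti (n : ℕ) : ∀ (m : L) (v : Fin (n+1) → L),
    Dop mul (m ⊗ₜ[K] (ιMulti K (n+1) v : E)) = rhsE mul n m v := by
  induction n with
  | zero =>
      intro m v
      have h1 : (ιMulti K 1 v : E) = ι K (v 0) * ιMulti K 0 (Fin.tail v) := by
        conv_lhs => rw [← Fin.cons_self_tail v]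
        rw [ιMulti_cons]
      rw [h1, ιMulti_zero_apply, Dop_ι_mul, Dop_one, map_zero, sub_zero, Lo_tmul, theta_one,
        tmul_zero, zero_sub]
      simp [rhsE, Fin.sum_univ_one]
  | succ n IH =>
      intro m v
      conv_lhs => rw [← Fin.cons_self_tail v]
      conv_rhs => rw [← Fin.cons_self_tail v]
      rw [ιMulti_cons, Dop_ι_mul, IH m (Fin.tail v), Lo_tmul,
        theta_ιMulti mul (v 0) (n+1) (Fin.tail v), rhsE_cons]
      abel


lemma wedge_coe (n : ℕ) (v : Fin n → L) :
    ((wedge K n v : (⋀[K]^n L : Submodule K E)) : E) = ιMulti K n v := rfl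

variable (K L) in
/-- Inclusion of `L ⊗ ⋀ⁿ L` into `L ⊗ ExteriorAlgebra K L`. -/
noncomputable def jmap (n : ℕ) :
    (L ⊗[K] (⋀[K]^n L : Submodule K (ExteriorAlgebra K L))) →ₗ[K] C :=
  LinearMap.lTensor L (⋀[K]^n L).subtype

lemma jmap_inj (n : ℕ) : Function.Injective (jmap K L n) :=
  Module.Flat.lTensor_preserves_injective_linearMap _ (Submodule.injective_subtype _)

lemma jmap_tmul (n : ℕ) (m : L) (w : (⋀[K]^n L : Submodule K (ExteriorAlgebra K L))) :
    jmap K L n (m ⊗ₜ[K] w) = m ⊗ₜ[K] (w : E) := rfl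

lemma wedge_span (n : ℕ) (w : (⋀[K]^n L : Submodule K (ExteriorAlgebra K L))) :
    w ∈ Submodule.span K (Set.range (wedge K n (L := L))) := by
  have h : ∀ y : E, y ∈ (⋀[K]^n L : Submodule K (ExteriorAlgebra K L)) →
      y ∈ Submodule.map (⋀[K]^n L).subtype
        (Submodule.span K (Set.range (wedge K n (L := L)))) := by
    intro y hy
    rw [← ιMulti_span_fixedDegree K n] at hy
    induction hy using Submodule.span_induction with
    | mem z hz =>
        obtain ⟨v, rfl⟩ := hz
        exact ⟨wedge K n v, Submodule.subset_span ⟨v, rfl⟩, rfl⟩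
    | zero => exact Submodule.zero_mem _
    | add a b _ _ hpa hpb => exact Submodule.add_mem _ hpa hpb
    | smul r a _ hpa => exact Submodule.smul_mem _ _ hpa
  obtain ⟨s, hs, hsw⟩ := h _ w.2
  have hse : s = w := Subtype.ext hsw
  rwa [hse] at hs

lemma tmul_wedge_span (n : ℕ) (c : L ⊗[K] (⋀[K]^n L : Submodule K (ExteriorAlgebra K L))) :
    c ∈ Submodule.span K {y | ∃ m v, y = m ⊗ₜ[K] wedge K n v} := by
  induction c with
  | zero => exact Submodule.zero_mem _
  | add a b ha hb => exact Submodule.add_mem _ ha hb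
  | tmul m w =>
      have hw := wedge_span n w
      induction hw using Submodule.span_induction with
      | mem y hy =>
          obtain ⟨v, rfl⟩ := hy
          exact Submodule.subset_span ⟨m, v, rfl⟩
      | zero =>
          rw [tmul_zero]; exact Submodule.zero_mem _
      | add a b ha hb hpa hpb =>
          rw [tmul_add]; exact Submodule.add_mem _ hpa hpb
      | smul r a ha hpa =>
          rw [tmul_smul]; exact Submodule.smul_mem _ _ hpa

/-- The value of the differential in the exterior-power model. -/
noncomputable def rhsS (n : ℕ) (m : L) (v : Fin (n+1) → L) :
    L ⊗[K] (⋀[K]^n L : Submodule K (ExteriorAlgebra K L)) :=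
  (∑ j : Fin (n+1), ((-1 : K) ^ (j.val + 1)) •
      (mul m (v j) ⊗ₜ[K] wedge K n (j.removeNth v)))
  + ∑ j : Fin (n+1), ∑ i : Fin (n+1),
      if i < j then ((-1 : K) ^ (j.val + 1)) •
        (m ⊗ₜ[K] wedge K n (j.removeNth (Function.update v i (br mul (v i) (v j)))))
      else 0

lemma jmap_rhsS (n : ℕ) (m : L) (v : Fin (n+1) → L) :
    jmap K L n (rhsS mul n m v) = rhsE mul n m v := by
  rw [rhsS, rhsE, map_add]
  congr 1
  · rw [map_sum]
    apply Finset.sum_congr rfl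
    intro j _
    rw [map_smul, jmap_tmul, wedge_coe]
  · rw [map_sum]
    apply Finset.sum_congr rfl
    intro j _
    rw [map_sum]
    apply Finset.sum_congr rfl
    intro i _
    by_cases h : i < j
    · rw [if_pos h, if_pos h, map_smul, jmap_tmul, wedge_coe]
    · rw [if_neg h, if_neg h, map_zero]

lemma Dop_jmap_mem (n : ℕ)
    (c : L ⊗[K] (⋀[K]^(n+1) L : Submodule K (ExteriorAlgebra K L))) :
    Dop mul (jmap K L (n+1) c) ∈ LinearMap.range (jmap K L n) := by
  have hc := tmul_wedge_span (n+1) c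
  induction hc using Submodule.span_induction with
  | mem y hy =>
      obtain ⟨m, v, rfl⟩ := hy
      rw [jmap_tmul, wedge_coe, Dop_ιMulti, ← jmap_rhsS]
      exact ⟨rhsS mul n m v, rfl⟩
  | zero => rw [map_zero, map_zero]; exact Submodule.zero_mem _
  | add a b ha hb hpa hpb => rw [map_add, map_add]; exact Submodule.add_mem _ hpa hpb
  | smul r a ha hpa => rw [map_smul, map_smul]; exact Submodule.smul_mem _ _ hpa

/-- The pre-Lie differential on `L ⊗ ⋀ⁿ⁺¹ L`. -/
noncomputable def dmap (n : ℕ) :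
    (L ⊗[K] (⋀[K]^(n+1) L : Submodule K (ExteriorAlgebra K L))) →ₗ[K]
      (L ⊗[K] (⋀[K]^n L : Submodule K (ExteriorAlgebra K L))) :=
  (LinearEquiv.ofInjective (jmap K L n) (jmap_inj n)).symm.toLinearMap ∘ₗ
    LinearMap.codRestrict (LinearMap.range (jmap K L n)) (Dop mul ∘ₗ jmap K L (n+1))
      (Dop_jmap_mem mul n)

lemma jmap_dmap (n : ℕ) (c : L ⊗[K] (⋀[K]^(n+1) L : Submodule K (ExteriorAlgebra K L))) :
    jmap K L n (dmap mul n c) = Dop mul (jmap K L (n+1) c) := by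
  have h := (LinearEquiv.ofInjective (jmap K L n) (jmap_inj n)).apply_symm_apply
    (LinearMap.codRestrict (LinearMap.range (jmap K L n)) (Dop mul ∘ₗ jmap K L (n+1))
      (Dop_jmap_mem mul n) c)
  have h2 := congrArg Subtype.val h
  simpa [dmap, LinearEquiv.ofInjective_apply, LinearMap.codRestrict_apply] using h2

lemma dmap_tmul_wedge (n : ℕ) (m : L) (v : Fin (n+1) → L) :
    dmap mul n (m ⊗ₜ[K] wedge K (n+1) v) = rhsS mul n m v := by
  apply jmap_inj n
  rw [jmap_dmap, jmap_tmul, wedge_coe, Dop_ιMulti, jmap_rhsS]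

lemma dmap_dmap
    (hpl : ∀ x y z : L,
      mul (mul x y) z - mul x (mul y z) = mul (mul x z) y - mul x (mul z y))
    (n : ℕ) (c : L ⊗[K] (⋀[K]^(n+2) L : Submodule K (ExteriorAlgebra K L))) :
    dmap mul n (dmap mul (n+1) c) = 0 := by
  apply jmap_inj n
  rw [jmap_dmap, jmap_dmap, Dop_Dop mul hpl, map_zero]

end PreLieCE


/-- Let `K` be a field of characteristic zero and `(L, ·)` a pre-Lie algebra
over `K`.  With `C_n(L) = L ⊗ Λ^{n-1}(L)` (here the module of chain degree `n+1` is
`L ⊗ ⋀[K]^n L`), the pre-Lie differential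
`d(v₀ ⊗ v₁∧⋯∧v_{n−1}) = Σ_j (−1)^j (v₀·v_j) ⊗ v₁∧⋯v̂_j⋯∧v_{n−1}
  + Σ_{i<j} (−1)^{i+j−1} v₀ ⊗ [v_i,v_j]∧v₁∧⋯v̂_i⋯v̂_j⋯∧v_{n−1}`
is a well-defined linear map with `d ∘ d = 0`, so `(C_•(L), d)` is a chain complex.
(The second sum is written below in the equivalent form obtained by placing `[v_i, v_j]`
in position `i` instead of at the front, which changes the sign `(−1)^{i+j−1}` to
`(−1)^{j+1}` in the 0-indexed conventions used here; both sums below are 0-indexed.) -/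
theorem preLie_differential_exists
    (K : Type*) [Field K] [CharZero K]
    (L : Type*) [AddCommGroup L] [Module K L]
    (mul : L →ₗ[K] L →ₗ[K] L)
    (hpl : ∀ x y z : L,
      mul (mul x y) z - mul x (mul y z) = mul (mul x z) y - mul x (mul z y)) :
    ∃ d : (n : ℕ) → (L ⊗[K] ⋀[K]^(n+1) L) →ₗ[K] (L ⊗[K] ⋀[K]^n L),
      (∀ (n : ℕ) (v₀ : L) (v : Fin (n+1) → L),
        d n (v₀ ⊗ₜ[K] wedge K (n+1) v)
          = (∑ j : Fin (n+1), ((-1 : K) ^ (j.val + 1)) •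
              (mul v₀ (v j) ⊗ₜ[K] wedge K n (j.removeNth v)))
            + ∑ j : Fin (n+1), ∑ i : Fin (n+1),
                if i < j then
                  ((-1 : K) ^ (j.val + 1)) •
                    (v₀ ⊗ₜ[K] wedge K n
                      (j.removeNth (Function.update v i (mul (v i) (v j) - mul (v j) (v i)))))
                else 0)
      ∧ (∀ n : ℕ, (d n).comp (d (n+1)) = 0) := by
  refine ⟨fun n => PreLieCE.dmap mul n, fun n v₀ v => ?_, fun n => ?_⟩
  · rw [PreLieCE.dmap_tmul_wedge]
    simp only [PreLieCE.rhsS, PreLieCE.br_apply]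
  · apply LinearMap.ext
    intro c
    rw [LinearMap.comp_apply, LinearMap.zero_apply]
    exact PreLieCE.dmap_dmap mul hpl n c
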